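/- Let X be a metric space and μ_j, ν_j tight probability measures on X. Then ‖μ_j − ν_j‖_d → 0 in the bounded-Lipschitz norm if and only if ρ(μ_j, ν_j) → 0, where ρ is the Lévy–Prokhorov metric. -/

import Mathlib

open MeasureTheory Filter

/-- The bounded-Lipschitz distance `‖μ − ν‖_d`. -/
noncomputable def blDist {X : Type*} [MetricSpace X] [MeasurableSpace X]
    (μ ν : Measure X) : ℝ :=
  ⨆ f : {f : X → ℝ // (∀ x, |f x| ≤ 1) ∧ LipschitzWith 1 f},
    (∫ x, f.1 x ∂μ - ∫ x, f.1 x ∂ν)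

section Aux

open Metric Set ENNReal BoundedContinuousFunction

variable {X : Type*} [MetricSpace X] [MeasurableSpace X] [BorelSpace X]

instance blClass_nonempty : Nonempty {f : X → ℝ // (∀ x, |f x| ≤ 1) ∧ LipschitzWith 1 f} :=
  ⟨⟨fun _ => 0, fun x => by simp, LipschitzWith.const' 0⟩⟩

lemma blDist_bddAbove (μ ν : Measure X) [IsProbabilityMeasure μ] [IsProbabilityMeasure ν] :
    BddAbove (Set.range fun f : {f : X → ℝ // (∀ x, |f x| ≤ 1) ∧ LipschitzWith 1 f} =>
      (∫ x, f.1 x ∂μ - ∫ x, f.1 x ∂ν)) := by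
  refine ⟨2, ?_⟩
  rintro y ⟨f, rfl⟩
  have h1 : |∫ x, f.1 x ∂μ| ≤ 1 := by
    have := norm_integral_le_of_norm_le_const (μ := μ) (f := f.1) (C := 1)
      (Eventually.of_forall fun x => by simpa using f.2.1 x)
    simpa using this
  have h2 : |∫ x, f.1 x ∂ν| ≤ 1 := by
    have := norm_integral_le_of_norm_le_const (μ := ν) (f := f.1) (C := 1)
      (Eventually.of_forall fun x => by simpa using f.2.1 x)
    simpa using this
  have := abs_le.mp h1
  have := abs_le.mp h2
  simp only
  linarith [this.1, this.2]

lemma le_blDist (μ ν : Measure X) [IsProbabilityMeasure μ] [IsProbabilityMeasure ν]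
    (f : {f : X → ℝ // (∀ x, |f x| ≤ 1) ∧ LipschitzWith 1 f}) :
    (∫ x, f.1 x ∂μ - ∫ x, f.1 x ∂ν) ≤ blDist μ ν :=
  le_ciSup (blDist_bddAbove μ ν) f

lemma blDist_nonneg (μ ν : Measure X) [IsProbabilityMeasure μ] [IsProbabilityMeasure ν] :
    0 ≤ blDist μ ν := by
  have h := le_blDist μ ν ⟨(fun _ => 0), fun x => by simp, LipschitzWith.const' 0⟩
  simpa using h

/-- If `ρ(μ,ν) < ε` then `‖μ-ν‖_d ≤ 3 ε`. -/
lemma blDist_le_of_lp (μ ν : Measure X) [IsProbabilityMeasure μ] [IsProbabilityMeasure ν]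
    {ε : ℝ} (ε_pos : 0 < ε) (h : levyProkhorovDist μ ν < ε) :
    blDist μ ν ≤ 3 * ε := by
  have hED : levyProkhorovEDist μ ν < ENNReal.ofReal ε :=
    (ENNReal.lt_ofReal_iff_toReal_lt (levyProkhorovEDist_ne_top μ ν)).mpr h
  apply ciSup_le
  rintro ⟨f, hf1, hfL⟩
  -- the shifted function g = f + 1, as a bounded continuous function
  set g : X →ᵇ ℝ := BoundedContinuousFunction.ofNormedAddCommGroup (fun x => f x + 1)
    (hfL.continuous.add continuous_const) 2
    (fun x => by
      have h' := abs_le.mp (hf1 x)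
      show ‖f x + 1‖ ≤ 2
      rw [Real.norm_eq_abs, abs_le]
      exact ⟨by linarith [h'.1], by linarith [h'.2]⟩) with hg_def
  have hgx : ∀ x, g x = f x + 1 := fun x => rfl
  have hg_nn : ∀ x, 0 ≤ g x := fun x => by
    have := (abs_le.mp (hf1 x)).1; rw [hgx]; linarith
  have hgL : LipschitzWith 1 g := by
    apply LipschitzWith.of_dist_le_mul
    intro x y
    have := hfL.dist_le_mul x y
    simpa [hgx, dist_add_right] using this
  have hM0 : (0:ℝ) ≤ ‖g‖ := norm_nonneg _
  have hM2 : ‖g‖ ≤ 2 := by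
    apply (BoundedContinuousFunction.norm_le (by norm_num)).mpr
    intro x
    have := abs_le.mp (hf1 x)
    rw [hgx, Real.norm_eq_abs, abs_le]; constructor <;> linarith [this.1, this.2]
  set M := ‖g‖
  -- the key estimate from mathlib
  have key := BoundedContinuousFunction.integral_le_of_levyProkhorovEDist_lt μ ν ε_pos hED g
    (Eventually.of_forall hg_nn)
  -- notation for the layer-cake integrands
  set F : ℝ → ℝ := fun s => (ν {a | s ≤ g a}).toReal with hF
  set G : ℝ → ℝ := fun t => (ν (thickening ε {a | t ≤ g a})).toReal with hG
  have F_anti : Antitone F := by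
    intro s t hst
    exact ENNReal.toReal_mono (measure_ne_top _ _) (measure_mono fun a ha => le_trans hst ha)
  have F_nonneg : ∀ s, 0 ≤ F s := fun s => ENNReal.toReal_nonneg
  have F_le_one : ∀ s, F s ≤ 1 := fun s => by
    have : ν {a | s ≤ g a} ≤ 1 := prob_le_one
    simpa [hF] using ENNReal.toReal_mono one_ne_top this
  have G_anti : Antitone G := by
    intro s t hst
    exact ENNReal.toReal_mono (measure_ne_top _ _)
      (measure_mono (thickening_subset_of_subset ε fun a ha => le_trans hst ha))
  have GleF : ∀ t, G t ≤ F (t - ε) := by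
    intro t
    apply ENNReal.toReal_mono (measure_ne_top _ _)
    apply measure_mono
    intro x hx
    rcases Metric.mem_thickening_iff.mp hx with ⟨y, hy, hxy⟩
    have := hgL.dist_le_mul x y
    rw [NNReal.coe_one, one_mul] at this
    have h1 : |g x - g y| ≤ dist x y := by rwa [← Real.dist_eq]
    have := (abs_le.mp h1).1
    have : t - ε ≤ g x := by
      have hyt : (t:ℝ) ≤ g y := hy
      linarith
    exact this
  have FA_anti : Antitone (fun t => F (t - ε)) := fun s t hst => F_anti (by linarith)
  have iF : ∀ a b : ℝ, IntervalIntegrable F volume a b := fun a b => F_anti.intervalIntegrable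
  have iG : IntervalIntegrable G volume 0 M := G_anti.intervalIntegrable
  have iFA : IntervalIntegrable (fun t => F (t - ε)) volume 0 M := FA_anti.intervalIntegrable
  -- layer cake for ν
  have layer : ∫ s in (0:ℝ)..M, F s = ∫ ω, g ω ∂ν := by
    rw [intervalIntegral.integral_of_le hM0]
    exact (BoundedContinuousFunction.integral_eq_integral_meas_le g ν
      (Eventually.of_forall hg_nn)).symm
  have step1 : ∫ t in Ioc (0:ℝ) M, G t ≤ ε + ∫ ω, g ω ∂ν := by
    rw [← intervalIntegral.integral_of_le hM0]
    calc ∫ t in (0:ℝ)..M, G t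
        ≤ ∫ t in (0:ℝ)..M, F (t - ε) :=
          intervalIntegral.integral_mono_on hM0 iG iFA (fun t _ => GleF t)
      _ = ∫ s in (0-ε)..(M-ε), F s := intervalIntegral.integral_comp_sub_right F ε
      _ ≤ ∫ s in (-ε)..M, F s := by
          rw [zero_sub]
          exact intervalIntegral.integral_mono_interval le_rfl (by linarith) (by linarith)
            (Eventually.of_forall F_nonneg) (iF _ _)
      _ = (∫ s in (-ε)..(0:ℝ), F s) + ∫ s in (0:ℝ)..M, F s :=
          (intervalIntegral.integral_add_adjacent_intervals (iF _ _) (iF _ _)).symm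
      _ ≤ ε + ∫ s in (0:ℝ)..M, F s := by
          have hb : ∫ s in (-ε)..(0:ℝ), F s ≤ ∫ s in (-ε)..(0:ℝ), (1:ℝ) :=
            intervalIntegral.integral_mono_on (by linarith) (iF _ _)
              intervalIntegrable_const (fun s _ => F_le_one s)
          have : ∫ s in (-ε)..(0:ℝ), (1:ℝ) = ε := by
            simp [intervalIntegral.integral_const]
          linarith
      _ = ε + ∫ ω, g ω ∂ν := by rw [layer]
  have hεM : ε * M ≤ 2 * ε := by nlinarith
  have main : ∫ ω, g ω ∂μ ≤ ∫ ω, g ω ∂ν + 3 * ε := by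
    calc ∫ ω, g ω ∂μ ≤ (∫ t in Ioc (0:ℝ) M, G t) + ε * ‖g‖ := key
      _ ≤ (ε + ∫ ω, g ω ∂ν) + 2 * ε := add_le_add step1 hεM
      _ = ∫ ω, g ω ∂ν + 3 * ε := by ring
  -- rewrite the integrals of g as integrals of f
  have hint : ∀ (κ : Measure X) [IsProbabilityMeasure κ],
      ∫ ω, g ω ∂κ = (∫ x, f x ∂κ) + 1 := by
    intro κ hκ
    have hif : Integrable f κ := by
      have := (g.integrable κ).sub (integrable_const (1:ℝ))
      apply this.congr
      filter_upwards with x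
      simp only [Pi.sub_apply, hgx x]; ring
    have : ∫ ω, g ω ∂κ = ∫ x, (f x + 1) ∂κ := by
      apply integral_congr_ae; filter_upwards with x; exact hgx x
    rw [this, integral_add hif (integrable_const 1)]
    simp
  rw [hint μ, hint ν] at main
  simp only
  linarith

/-- If `‖μ-ν‖_d ≤ ε²` with `0 < ε ≤ 1` then `ρ(μ,ν) ≤ ε`. -/
lemma lp_le_of_blDist (μ ν : Measure X) [IsProbabilityMeasure μ] [IsProbabilityMeasure ν]
    {ε : ℝ} (ε_pos : 0 < ε) (ε_le : ε ≤ 1) (h : blDist μ ν ≤ ε ^ 2) :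
    levyProkhorovDist μ ν ≤ ε := by
  apply levyProkhorovDist_le_of_forall_le μ ν ε_pos.le
  intro ε' B hε' hB
  have hε'0 : 0 < ε' := lt_trans ε_pos hε'
  rcases le_or_gt 1 ε' with h1 | h1
  · calc μ B ≤ 1 := prob_le_one
      _ ≤ ENNReal.ofReal ε' := by
          rw [show ((1:ℝ≥0∞) = ENNReal.ofReal 1) by simp]
          exact ENNReal.ofReal_le_ofReal h1
      _ ≤ ν (thickening ε' B) + ENNReal.ofReal ε' := le_add_self
  · rcases B.eq_empty_or_nonempty with rfl | hBne
    · simp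
    -- test function h0
    set h0 : X → ℝ := fun x => max 0 (ε' - infDist x B) with hh0
    have h0_nn : ∀ x, 0 ≤ h0 x := fun x => le_max_left _ _
    have h0_le : ∀ x, h0 x ≤ ε' := fun x => by
      apply max_le hε'0.le
      have := infDist_nonneg (s := B) (x := x)
      linarith
    have h0_abs : ∀ x, |h0 x| ≤ 1 := fun x => by
      rw [abs_of_nonneg (h0_nn x)]
      exact (h0_le x).trans h1.le
    have h0_lip : LipschitzWith 1 h0 := by
      have l2 : LipschitzWith 1 (fun x => ε' - infDist x B) := by
        apply LipschitzWith.of_dist_le_mul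
        intro x y
        rw [dist_sub_left]
        exact (lipschitz_infDist_pt B).dist_le_mul x y
      have := (LipschitzWith.const' (0:ℝ) (K := 1)).max l2
      simpa using this
    have h0_cont : Continuous h0 := h0_lip.continuous
    have h0_int : ∀ (κ : Measure X) [IsProbabilityMeasure κ], Integrable h0 κ := by
      intro κ hκ
      refine ⟨h0_cont.aestronglyMeasurable, ?_⟩
      apply HasFiniteIntegral.of_bounded (C := 1)
      filter_upwards with x
      rw [Real.norm_eq_abs]; exact h0_abs x
    have h0_onB : ∀ x ∈ B, h0 x = ε' := fun x hx => by
      rw [hh0]; simp [infDist_zero_of_mem hx, hε'0.le]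
    set T := thickening ε' B with hT
    have h0_offT : ∀ x ∉ T, h0 x = 0 := by
      intro x hx
      have : ¬ infDist x B < ε' := fun hc => hx ((mem_thickening_iff_infDist_lt hBne).mpr hc)
      rw [hh0]
      simp only [max_eq_left_iff]
      linarith [not_lt.mp this]
    -- lower bound for ∫ h0 dμ
    have lower : ε' * (μ B).toReal ≤ ∫ x, h0 x ∂μ := by
      have e1 : ∫ x in B, h0 x ∂μ = ε' * (μ B).toReal := by
        rw [setIntegral_congr_fun hB h0_onB, setIntegral_const, smul_eq_mul, mul_comm]; rfl
      rw [← e1]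
      exact setIntegral_le_integral (h0_int μ) (Eventually.of_forall h0_nn)
    -- upper bound for ∫ h0 dν
    have upper : ∫ x, h0 x ∂ν ≤ ε' * (ν T).toReal := by
      have hTm : MeasurableSet T := isOpen_thickening.measurableSet
      have split := integral_add_compl hTm (h0_int ν)
      have e2 : ∫ x in Tᶜ, h0 x ∂ν = 0 := by
        rw [setIntegral_congr_fun hTm.compl (fun x hx => h0_offT x hx)]
        simp
      have e3 : ∫ x in T, h0 x ∂ν ≤ ε' * (ν T).toReal := by
        calc ∫ x in T, h0 x ∂ν ≤ ∫ _ in T, ε' ∂ν :=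
              setIntegral_mono_on ((h0_int ν).integrableOn)
                ((integrableOn_const_iff).mpr (Or.inr (measure_lt_top ν T))) hTm
                (fun x _ => h0_le x)
          _ = ε' * (ν T).toReal := by rw [setIntegral_const, smul_eq_mul, mul_comm]; rfl
      linarith [split, e2, e3]
    -- use the BL distance
    have mid : ∫ x, h0 x ∂μ - ∫ x, h0 x ∂ν ≤ ε ^ 2 :=
      le_trans (le_blDist μ ν ⟨h0, h0_abs, h0_lip⟩) h
    -- combine
    have keyR : (μ B).toReal ≤ (ν T).toReal + ε' := by
      have h4 : ε' * (μ B).toReal ≤ ε' * (ν T).toReal + ε ^ 2 := by linarith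
      have h5 : ε ^ 2 ≤ ε * ε' := by nlinarith
      nlinarith [h4, h5, hε'0]
    calc μ B = ENNReal.ofReal (μ B).toReal := (ENNReal.ofReal_toReal (measure_ne_top μ B)).symm
      _ ≤ ENNReal.ofReal ((ν T).toReal + ε') := ENNReal.ofReal_le_ofReal keyR
      _ = ENNReal.ofReal (ν T).toReal + ENNReal.ofReal ε' :=
          ENNReal.ofReal_add ENNReal.toReal_nonneg hε'0.le
      _ = ν T + ENNReal.ofReal ε' := by rw [ENNReal.ofReal_toReal (measure_ne_top ν T)]

end Aux

/-- for sequences of tight probability measures, convergence to `0` of the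
bounded-Lipschitz norms `‖μ_j − ν_j‖_d` is equivalent to convergence to `0` of the
Lévy–Prokhorov distances `ρ(μ_j, ν_j)`. -/
theorem blDist_tendsto_zero_iff_levyProkhorov
    {X : Type*} [MetricSpace X] [MeasurableSpace X] [BorelSpace X]
    (μ ν : ℕ → Measure X)
    (hμp : ∀ j, IsProbabilityMeasure (μ j)) (hνp : ∀ j, IsProbabilityMeasure (ν j))
    (hμt : ∀ j, (μ j).InnerRegular) (hνt : ∀ j, (ν j).InnerRegular) :
    Tendsto (fun j => blDist (μ j) (ν j)) atTop (nhds 0) ↔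
    Tendsto (fun j => levyProkhorovDist (μ j) (ν j)) atTop (nhds 0) := by
  have hlp_nn : ∀ j, 0 ≤ levyProkhorovDist (μ j) (ν j) := fun j => ENNReal.toReal_nonneg
  constructor
  · intro hBL
    rw [NormedAddCommGroup.tendsto_nhds_zero] at hBL ⊢
    intro ε hε
    set ε0 : ℝ := min (ε / 2) 1 with hε0_def
    have hε0_pos : 0 < ε0 := lt_min (by linarith) one_pos
    have hε0_le : ε0 ≤ 1 := min_le_right _ _
    filter_upwards [hBL (ε0 ^ 2) (by positivity)] with j hj
    haveI := hμp j; haveI := hνp j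
    have hBLj : blDist (μ j) (ν j) ≤ ε0 ^ 2 :=
      (le_abs_self _).trans (le_of_lt (by simpa [Real.norm_eq_abs] using hj))
    have hρ : levyProkhorovDist (μ j) (ν j) ≤ ε0 :=
      lp_le_of_blDist (μ j) (ν j) hε0_pos hε0_le hBLj
    rw [Real.norm_eq_abs, abs_of_nonneg (hlp_nn j)]
    calc levyProkhorovDist (μ j) (ν j) ≤ ε0 := hρ
      _ ≤ ε / 2 := min_le_left _ _
      _ < ε := by linarith
  · intro hLP
    rw [NormedAddCommGroup.tendsto_nhds_zero] at hLP ⊢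
    intro ε hε
    filter_upwards [hLP (ε / 6) (by linarith)] with j hj
    haveI := hμp j; haveI := hνp j
    have hρ : levyProkhorovDist (μ j) (ν j) < ε / 6 :=
      (le_abs_self _).trans_lt (by simpa [Real.norm_eq_abs] using hj)
    have hBLj : blDist (μ j) (ν j) ≤ 3 * (ε / 6) :=
      blDist_le_of_lp (μ j) (ν j) (by linarith) hρ
    rw [Real.norm_eq_abs, abs_of_nonneg (blDist_nonneg (μ j) (ν j))]
    linarith
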